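/- In Minkowski space M^{1,n}, let k be a nonzero null vector, z' ∈ M^{1,n}, A, A' ∈ ℝ, Z, Z' ∈ M^{1,n}, and define the affine Killing vector fields ζ_{A,Z}(x) = A k + ⟨k,z'⟩ Z + ⟨Z,x⟩ k − ⟨k,x⟩ Z. Then ζ_{A,Z} = ζ_{A',Z'} if and only if there exists a ∈ ℝ with Z' = Z + a k and A' = A − a⟨k,z'⟩. Consequently the space of such vector fields {ζ_{A,Z} : A ∈ ℝ, Z ∈ M^{1,n}} has dimension n+1. -/

import Mathlib

/-- The linear map (A, Z) ↦ ζ_{A,Z}, where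
ζ_{A,Z}(x) = A k + ⟨k,z'⟩ Z + ⟨Z,x⟩ k − ⟨k,x⟩ Z. -/
noncomputable def zetaMap {V : Type*} [AddCommGroup V] [Module ℝ V]
    (B : V →ₗ[ℝ] V →ₗ[ℝ] ℝ) (k z' : V) : (ℝ × V) →ₗ[ℝ] (V → V) where
  toFun p := fun x => p.1 • k + (B k z') • p.2 + (B p.2 x) • k - (B k x) • p.2
  map_add' p p' := by
    funext x
    simp [add_smul, smul_add]
    abel
  map_smul' c p := by
    funext x
    simp [smul_smul, smul_sub, smul_add, mul_comm]

/-- In Minkowski space M^{1,n}, ζ_{A,Z} = ζ_{A',Z'} iff Z' = Z + a k and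
A' = A − a⟨k,z'⟩ for some a ∈ ℝ; consequently the space of all such Killing
vector fields has dimension n + 1. -/
theorem zeta_eq_iff_and_dim
    (n : ℕ) (V : Type*) [AddCommGroup V] [Module ℝ V]
    (B : V →ₗ[ℝ] V →ₗ[ℝ] ℝ)
    (b : Module.Basis (Fin 1 ⊕ Fin n) ℝ V)
    (hb : ∀ i j, B (b i) (b j) =
      if i = j then Sum.elim (fun _ => (-1 : ℝ)) (fun _ => (1 : ℝ)) i else 0)
    (k z' : V) (hk0 : k ≠ 0) (hknull : B k k = 0) :
    (∀ (A A' : ℝ) (Z Z' : V),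
      zetaMap B k z' (A, Z) = zetaMap B k z' (A', Z') ↔
        ∃ a : ℝ, Z' = Z + a • k ∧ A' = A - a * B k z') ∧
    Module.finrank ℝ (LinearMap.range (zetaMap B k z')) = n + 1 := by
  haveI : FiniteDimensional ℝ V := Module.Basis.finiteDimensional_of_finite b
  -- there exists x with B k x ≠ 0
  obtain ⟨x0, hx0⟩ : ∃ x, B k x ≠ 0 := by
    by_contra h
    push_neg at h
    apply hk0
    rw [← b.forall_coord_eq_zero_iff]
    intro j
    have hj := h (b j)
    rw [← b.sum_repr k, map_sum] at hj
    simp only [map_smul, LinearMap.sum_apply, LinearMap.smul_apply, hb, smul_eq_mul,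
      mul_ite, mul_zero] at hj
    rw [Finset.sum_ite_eq' Finset.univ j] at hj
    simp only [Finset.mem_univ, if_true] at hj
    rcases j with j | j <;> simpa [Module.Basis.coord_apply] using hj
  -- kernel description
  have hker : ∀ D : ℝ, ∀ W : V, zetaMap B k z' (D, W) = 0 →
      ∃ a : ℝ, W = -(a • k) ∧ D = a * B k z' := by
    intro D W h
    have heq : ∀ x, D • k + (B k z') • W + (B W x) • k - (B k x) • W = 0 := by
      intro x
      have := congrFun h x
      simpa [zetaMap] using this
    have h0 : D • k + (B k z') • W = 0 := by simpa using heq 0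
    have h1 : (B W x0) • k - (B k x0) • W = 0 := by
      have h2 := heq x0
      rw [add_sub_assoc, h0, zero_add] at h2
      exact h2
    set a0 : ℝ := B W x0 / B k x0 with ha0
    have hW : W = a0 • k := by
      have : (B k x0) • W = (B W x0) • k := by
        rw [← sub_eq_zero]; rw [← neg_eq_zero, neg_sub]; exact h1
      have := congrArg (fun v => (B k x0)⁻¹ • v) this
      simp only [smul_smul, inv_mul_cancel₀ hx0, one_smul] at this
      rw [this, ha0, div_eq_inv_mul, mul_smul]
    have hD : D = -(a0 * B k z') := by
      have h0' : (D + a0 * B k z') • k = 0 := by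
        rw [add_smul, mul_comm, mul_smul]
        rw [hW] at h0
        simpa [smul_smul, mul_comm] using h0
      rcases smul_eq_zero.mp h0' with h | h
      · linarith
      · exact absurd h hk0
    exact ⟨-a0, by rw [hW]; simp, by rw [hD]; ring⟩
  have hiff : ∀ (A A' : ℝ) (Z Z' : V),
      zetaMap B k z' (A, Z) = zetaMap B k z' (A', Z') ↔
        ∃ a : ℝ, Z' = Z + a • k ∧ A' = A - a * B k z' := by
    intro A A' Z Z'
    constructor
    · intro h
      have hz : zetaMap B k z' (A' - A, Z' - Z) = 0 := by
        have : ((A' - A, Z' - Z) : ℝ × V) = (A', Z') - (A, Z) := rfl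
        rw [this, map_sub, h, sub_self]
      obtain ⟨a, hW, hD⟩ := hker _ _ hz
      refine ⟨-a, ?_, ?_⟩
      · have : Z' - Z = -(a • k) := hW
        rw [neg_smul]
        linear_combination (norm := module) this
      · have : A' - A = a * B k z' := hD
        linarith [this]
    · rintro ⟨a, hZ, hA⟩
      funext x
      simp only [zetaMap, LinearMap.coe_mk, AddHom.coe_mk, hZ, hA, map_add,
        map_smul, LinearMap.add_apply, LinearMap.smul_apply, smul_eq_mul]
      module
  refine ⟨hiff, ?_⟩
  -- kernel is the span of (B k z', -k)
  have hkereq : LinearMap.ker (zetaMap B k z') = Submodule.span ℝ {((B k z' : ℝ), -k)} := by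
    ext ⟨D, W⟩
    rw [LinearMap.mem_ker, Submodule.mem_span_singleton]
    constructor
    · intro h
      obtain ⟨a, hW, hD⟩ := hker D W h
      exact ⟨a, by rw [Prod.smul_mk]; ext <;> simp [hD, hW, mul_comm]⟩
    · rintro ⟨a, ha⟩
      rw [← ha]
      have : a • ((B k z' : ℝ), -k) = ((a * B k z' : ℝ), -(a • k)) := by
        rw [Prod.smul_mk]; ext <;> simp [mul_comm]
      rw [this]
      funext x
      simp only [zetaMap, LinearMap.coe_mk, AddHom.coe_mk, map_neg, map_smul,
        LinearMap.neg_apply, LinearMap.smul_apply, smul_eq_mul, Pi.zero_apply]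
      module
  have hne : ((B k z' : ℝ), -k) ≠ (0 : ℝ × V) := by
    intro h
    apply hk0
    have := congrArg Prod.snd h
    simpa [neg_eq_zero] using this
  have hkr : Module.finrank ℝ (LinearMap.ker (zetaMap B k z')) = 1 := by
    rw [hkereq, finrank_span_singleton hne]
  have hrn := LinearMap.finrank_range_add_finrank_ker (zetaMap B k z')
  have hdom : Module.finrank ℝ (ℝ × V) = n + 2 := by
    rw [Module.finrank_prod, Module.finrank_self, Module.finrank_eq_card_basis b]
    simp [Fintype.card_sum]
    ring
  rw [hdom, hkr] at hrn
  omega
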